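/- Under assumptions (iv), (v), (vi) on the first space and (ix), (x) linking it to the second space, all taken with B' = 𝒳', suppose in addition that 𝐗' is measurable from 𝐀 to ℬ' and that 𝐏(𝐂) > 0. Then 𝐗' and 𝐗 are conditionally independent given 𝐂 and the conditional law of 𝐗 given 𝐂 is π: for every B ∈ ℬ and F ∈ ℬ', 𝐏({𝐗' ∈ F} ∩ {𝐗 ∈ B} | 𝐂) = 𝐏(𝐗' ∈ F | 𝐂) · 𝐏(𝐗 ∈ B | 𝐂), and 𝐏(𝐗 ∈ B | 𝐂) = π(B). (Corollary 6.6 of the paper.) -/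

import Mathlib

open MeasureTheory ProbabilityTheory

/-- Corollary 6.6 of Fill–Machida–Murdoch–Rosenthal:
under assumptions (iv), (v), (vi) on the first space and (ix), (x) linking it to
the second space, all taken with `B' = 𝒳'`, if moreover `𝐗'` is measurable and
`𝐏(𝐂) > 0`, then `𝐗'` and `𝐗` are conditionally independent given `𝐂`, and the
conditional law of `𝐗` given `𝐂` is `π`. -/
theorem stmt5
    {Ω bΩ 𝓧 𝓧' : Type*} [MeasurableSpace Ω] [MeasurableSpace bΩ]
    [MeasurableSpace 𝓧] [MeasurableSpace 𝓧']
    (P : Measure Ω) [IsProbabilityMeasure P]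
    (bP : Measure bΩ) [IsProbabilityMeasure bP]
    (π : Measure 𝓧) [IsProbabilityMeasure π]
    (X : Ω → 𝓧) (X' : Ω → 𝓧') (Y : Ω → 𝓧') (C : Set Ω)
    (bX : bΩ → 𝓧) (bX' : bΩ → 𝓧') (bC : Set bΩ)
    -- (iv): X is measurable with law π
    (hXmeas : Measurable X) (hXlaw : P.map X = π)
    -- (v) with B' = 𝒳'
    (hv : ∀ F : Set 𝓧', MeasurableSet F →
      MeasurableSet (X' ⁻¹' F ∩ C) ∧ MeasurableSet (Y ⁻¹' F ∩ C))
    -- (vi) with B' = 𝒳'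
    (hvi : ∀ F : Set 𝓧', MeasurableSet F → ∀ B : Set 𝓧, MeasurableSet B → 0 < π B →
      P[X' ⁻¹' F ∩ C | X ⁻¹' B] = P (Y ⁻¹' F ∩ C))
    -- (viii): 𝐗 is measurable
    (hbXmeas : Measurable bX)
    -- (ix) with B' = 𝒳'
    (hix : ∀ F : Set 𝓧', MeasurableSet F → MeasurableSet (bX' ⁻¹' F ∩ bC))
    -- the measures ν_B on (𝒳', ℬ'), ν_B(F) = P({X' ∈ F} ∩ C ∩ {X ∈ B})
    (ν : Set 𝓧 → Measure 𝓧')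
    (hν : ∀ B : Set 𝓧, MeasurableSet B → ∀ F : Set 𝓧', MeasurableSet F →
      ν B F = P (X' ⁻¹' F ∩ C ∩ X ⁻¹' B))
    -- (x): a density D on 𝒳', not depending on B
    (D : 𝓧' → NNReal) (hDmeas : Measurable D)
    (hx : ∀ B : Set 𝓧, MeasurableSet B → ∀ F : Set 𝓧', MeasurableSet F →
      bP (bX' ⁻¹' F ∩ bC ∩ bX ⁻¹' B) = ∫⁻ u in F, (D u : ENNReal) ∂(ν B))
    -- 𝐗' is measurable
    (hbX'meas : Measurable bX')
    -- 𝐏(𝐂) > 0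
    (hpos : 0 < bP bC) :
    (∀ B : Set 𝓧, MeasurableSet B → ∀ F : Set 𝓧', MeasurableSet F →
        bP[bX' ⁻¹' F ∩ bX ⁻¹' B | bC] = bP[bX' ⁻¹' F | bC] * bP[bX ⁻¹' B | bC]) ∧
      (∀ B : Set 𝓧, MeasurableSet B → bP[bX ⁻¹' B | bC] = π B) := by

  have hlaw : ∀ B : Set 𝓧, MeasurableSet B → P (X ⁻¹' B) = π B := by
    intro B hB
    rw [← hXlaw, Measure.map_apply hXmeas hB]
  have hbCmeas : MeasurableSet bC := by
    have := hix Set.univ MeasurableSet.univ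
    simpa using this
  have hbCne : bP bC ≠ 0 := hpos.ne'
  have hbCfin : bP bC ≠ ⊤ := measure_ne_top _ _
  have hmain : ∀ B : Set 𝓧, MeasurableSet B → ∀ F : Set 𝓧', MeasurableSet F →
      P (X' ⁻¹' F ∩ C ∩ X ⁻¹' B) = π B * P (X' ⁻¹' F ∩ C) := by
    intro B hB F hF
    have hYF : P (X' ⁻¹' F ∩ C) = P (Y ⁻¹' F ∩ C) := by
      have hu : (0 : ENNReal) < π Set.univ := by simp
      have h2 := hvi F hF Set.univ MeasurableSet.univ hu
      rw [ProbabilityTheory.cond_apply (hXmeas MeasurableSet.univ)] at h2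
      simp only [Set.preimage_univ, measure_univ, Set.univ_inter] at h2
      simpa using h2
    rcases eq_or_lt_of_le (zero_le : 0 ≤ π B) with h0 | hpos'
    · have h1 : P (X' ⁻¹' F ∩ C ∩ X ⁻¹' B) ≤ P (X ⁻¹' B) :=
        measure_mono Set.inter_subset_right
      rw [hlaw B hB, ← h0] at h1
      rw [← h0]
      simpa using le_antisymm h1 zero_le
    · have h2 := hvi F hF B hB hpos'
      rw [ProbabilityTheory.cond_apply (hXmeas hB), hlaw B hB] at h2
      have hne : π B ≠ 0 := hpos'.ne'
      have hfin : π B ≠ ⊤ := measure_ne_top _ _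
      have h3 : P (X ⁻¹' B ∩ (X' ⁻¹' F ∩ C)) = π B * P (Y ⁻¹' F ∩ C) := by
        rw [← h2, ← mul_assoc, ENNReal.mul_inv_cancel hne hfin, one_mul]
      rw [Set.inter_comm (X' ⁻¹' F ∩ C) (X ⁻¹' B), h3, hYF]
  have hνeq : ∀ B : Set 𝓧, MeasurableSet B → ν B = (π B) • ν Set.univ := by
    intro B hB
    ext F hF
    rw [hν B hB F hF, Measure.smul_apply, smul_eq_mul,
      hν Set.univ MeasurableSet.univ F hF]
    simp only [Set.preimage_univ, Set.inter_univ]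
    exact hmain B hB F hF
  have key : ∀ B : Set 𝓧, MeasurableSet B → ∀ F : Set 𝓧', MeasurableSet F →
      bP (bX' ⁻¹' F ∩ bC ∩ bX ⁻¹' B) = π B * bP (bX' ⁻¹' F ∩ bC) := by
    intro B hB F hF
    have huniv : bP (bX' ⁻¹' F ∩ bC) = ∫⁻ u in F, (D u : ENNReal) ∂(ν Set.univ) := by
      have := hx Set.univ MeasurableSet.univ F hF
      simpa using this
    rw [hx B hB F hF, hνeq B hB, Measure.restrict_smul, lintegral_smul_measure,
      ← huniv, smul_eq_mul]
  have hcondX : ∀ B : Set 𝓧, MeasurableSet B → bP[bX ⁻¹' B | bC] = π B := by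
    intro B hB
    have h4 : bP (bC ∩ bX ⁻¹' B) = π B * bP bC := by
      have := key B hB Set.univ MeasurableSet.univ
      simpa using this
    rw [ProbabilityTheory.cond_apply hbCmeas, h4, mul_comm (π B) (bP bC),
      ← mul_assoc, ENNReal.inv_mul_cancel hbCne hbCfin, one_mul]
  refine ⟨?_, hcondX⟩
  intro B hB F hF
  have h5 : bC ∩ (bX' ⁻¹' F ∩ bX ⁻¹' B) = bX' ⁻¹' F ∩ bC ∩ bX ⁻¹' B := by
    rw [← Set.inter_assoc, Set.inter_comm bC (bX' ⁻¹' F)]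
  rw [ProbabilityTheory.cond_apply hbCmeas, h5, key B hB F hF, hcondX B hB,
    ProbabilityTheory.cond_apply hbCmeas, Set.inter_comm bC (bX' ⁻¹' F)]
  ring
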